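/- Let k be an algebraically closed field of characteristic zero and let R = k[x,y] be the polynomial ring in two variables, equipped with a Poisson bracket satisfying {x,y} = xy. Then the prime ideals of R that are Poisson ideals are exactly the following: the maximal ideals ⟨x − α, y⟩ for α ∈ k, the maximal ideals ⟨x, y − β⟩ for β ∈ k, the height one primes ⟨x⟩ and ⟨y⟩, and the zero ideal ⟨0⟩. -/

import Mathlib

/-- A Poisson bracket on a commutative `k`-algebra `R`: a `k`-bilinear,
antisymmetric map satisfying the Jacobi and Leibniz identities. -/
structure PoissonBracket (k : Type*) (R : Type*) [CommRing k] [CommRing R] [Algebra k R] where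
  bracket : R → R → R
  add_left : ∀ a b c : R, bracket (a + b) c = bracket a c + bracket b c
  add_right : ∀ a b c : R, bracket a (b + c) = bracket a b + bracket a c
  smul_left : ∀ (t : k) (a b : R), bracket (t • a) b = t • bracket a b
  smul_right : ∀ (t : k) (a b : R), bracket a (t • b) = t • bracket a b
  antisymm : ∀ a b : R, bracket a b = - bracket b a
  jacobi : ∀ a b c : R,
    bracket a (bracket b c) + bracket b (bracket c a) + bracket c (bracket a b) = 0
  leibniz : ∀ a b c : R, bracket a (b * c) = bracket a b * c + b * bracket a c

/-- An ideal `I` is a Poisson ideal if `{R, I} ⊆ I`. -/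
def IsPoissonIdeal {k R : Type*} [CommRing k] [CommRing R] [Algebra k R]
    (B : PoissonBracket k R) (I : Ideal R) : Prop :=
  ∀ a : R, ∀ x ∈ I, B.bracket a x ∈ I

/-- The Poisson core of an ideal `J`: the largest Poisson ideal contained in `J`,
i.e. the sum of all Poisson ideals contained in `J`. -/
def poissonCore {k R : Type*} [CommRing k] [CommRing R] [Algebra k R]
    (B : PoissonBracket k R) (J : Ideal R) : Ideal R :=
  sSup {I : Ideal R | IsPoissonIdeal B I ∧ I ≤ J}

/-- A Poisson-primitive ideal: the Poisson core of some maximal ideal. -/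
def IsPoissonPrimitive {k R : Type*} [CommRing k] [CommRing R] [Algebra k R]
    (B : PoissonBracket k R) (P : Ideal R) : Prop :=
  ∃ m : Ideal R, m.IsMaximal ∧ poissonCore B m = P

set_option linter.unusedSectionVars false

open MvPolynomial

section GenericBracket
variable {k R : Type*} [CommRing k] [CommRing R] [Algebra k R] (B : PoissonBracket k R)

lemma QP.brk_one (a : R) : B.bracket a 1 = 0 := by
  have h := B.leibniz a 1 1
  simpa using h

lemma QP.brk_C_right (a : R) (t : k) : B.bracket a (algebraMap k R t) = 0 := by
  have h : (algebraMap k R t) = t • (1 : R) := Algebra.algebraMap_eq_smul_one t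
  rw [h, B.smul_right, QP.brk_one, smul_zero]

lemma QP.brk_zero_right (a : R) : B.bracket a 0 = 0 := by
  have h := B.smul_right 0 a 0
  simpa using h

lemma QP.brk_neg_right (a b : R) : B.bracket a (-b) = - B.bracket a b := by
  have h := B.smul_right (-1) a b
  simpa [neg_one_smul] using h

lemma QP.brk_sub_right (a b c : R) :
    B.bracket a (b - c) = B.bracket a b - B.bracket a c := by
  rw [sub_eq_add_neg, B.add_right, QP.brk_neg_right, sub_eq_add_neg]

/-- To check that a span is a Poisson ideal, it suffices to check brackets
with the generators. -/
lemma QP.isPoissonIdeal_span (S : Set R)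
    (h : ∀ a : R, ∀ s ∈ S, B.bracket a s ∈ Ideal.span S) :
    IsPoissonIdeal B (Ideal.span S) := by
  intro a x hx
  induction hx using Submodule.span_induction with
  | mem s hs => exact h a s hs
  | zero => rw [QP.brk_zero_right]; exact Ideal.zero_mem _
  | add x y hx hy ihx ihy => rw [B.add_right]; exact Ideal.add_mem _ ihx ihy
  | smul r x hx ihx =>
    rw [smul_eq_mul, B.leibniz]
    exact Ideal.add_mem _ (Ideal.mul_mem_left _ _ hx) (Ideal.mul_mem_left _ _ ihx)

end GenericBracket

section Aux
variable {k : Type*} [Field k] [CharZero k]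
  (B : PoissonBracket k (MvPolynomial (Fin 2) k))

lemma QP.brk_C_right' (a : MvPolynomial (Fin 2) k) (t : k) :
    B.bracket a (C t) = 0 := by
  rw [← algebraMap_eq]
  exact QP.brk_C_right B a t

lemma QP.brk_self (a : MvPolynomial (Fin 2) k) : B.bracket a a = 0 := by
  have h := B.antisymm a a
  have h2 : (2 : MvPolynomial (Fin 2) k) * B.bracket a a = 0 := by
    rw [two_mul]; exact eq_neg_iff_add_eq_zero.mp h
  rcases mul_eq_zero.mp h2 with h3 | h3
  · exact absurd h3 (by norm_num)
  · exact h3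

variable (hB : B.bracket (X 0) (X 1) = X 0 * X 1)
include hB

lemma QP.brk_X0_left (f : MvPolynomial (Fin 2) k) :
    B.bracket (X 0) f = X 0 * X 1 * pderiv 1 f := by
  induction f using MvPolynomial.induction_on with
  | C a => rw [QP.brk_C_right', pderiv_C, mul_zero]
  | add p q hp hq => rw [B.add_right, hp, hq, map_add, mul_add]
  | mul_X p n ih =>
    rw [B.leibniz, ih, pderiv_mul]
    fin_cases n
    all_goals simp only [Fin.zero_eta, Fin.mk_one]
    · rw [QP.brk_self, pderiv_X_of_ne (by decide)]
      ring
    · rw [hB, pderiv_X_self]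
      ring

lemma QP.brk_X1_left (f : MvPolynomial (Fin 2) k) :
    B.bracket (X 1) f = -(X 0 * X 1 * pderiv 0 f) := by
  induction f using MvPolynomial.induction_on with
  | C a => rw [QP.brk_C_right', pderiv_C, mul_zero, neg_zero]
  | add p q hp hq => rw [B.add_right, hp, hq, map_add, mul_add, neg_add]
  | mul_X p n ih =>
    rw [B.leibniz, ih, pderiv_mul]
    fin_cases n
    all_goals simp only [Fin.zero_eta, Fin.mk_one]
    · rw [B.antisymm (X 1) (X 0), hB, pderiv_X_self]
      ring
    · rw [QP.brk_self, pderiv_X_of_ne (by decide)]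
      ring

lemma QP.brk_X0_right (f : MvPolynomial (Fin 2) k) :
    B.bracket f (X 0) = -(X 0 * X 1 * pderiv 1 f) := by
  rw [B.antisymm, QP.brk_X0_left B hB]

lemma QP.brk_X1_right (f : MvPolynomial (Fin 2) k) :
    B.bracket f (X 1) = X 0 * X 1 * pderiv 0 f := by
  rw [B.antisymm, QP.brk_X1_left B hB, neg_neg]

end Aux

section Deriv
variable {k : Type*} [Field k] [CharZero k]

lemma QP.coeff_pderiv (i : Fin 2) (f : MvPolynomial (Fin 2) k) (d : Fin 2 →₀ ℕ) :
    coeff d (pderiv i f) = ((d i + 1 : ℕ) : k) * coeff (d + Finsupp.single i 1) f := by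
  induction f using MvPolynomial.induction_on' with
  | add p q hp hq => simp [hp, hq, mul_add]
  | monomial s a =>
    rw [pderiv_monomial, coeff_monomial, coeff_monomial]
    by_cases hs : s = d + Finsupp.single i 1
    · have h1 : s - Finsupp.single i 1 = d := by
        rw [hs]; ext j; rw [Finsupp.tsub_apply, Finsupp.add_apply]
        rcases eq_or_ne j i with rfl | hj
        · rw [Finsupp.single_eq_same]; omega
        · rw [Finsupp.single_eq_of_ne hj]; omega
      have h2 : s i = d i + 1 := by
        rw [hs]; simp [Finsupp.add_apply, Finsupp.single_eq_same]
      rw [if_pos h1, if_pos hs, h2]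
      push_cast
      ring
    · rw [if_neg hs]
      by_cases h1 : s - Finsupp.single i 1 = d
      · by_cases hsi : s i = 0
        · rw [if_pos h1, hsi]
          simp
        · exfalso
          apply hs
          ext j
          have hpt := DFunLike.congr_fun h1 j
          rw [Finsupp.tsub_apply] at hpt
          rw [Finsupp.add_apply]
          by_cases hj : j = i
          · subst hj
            rw [Finsupp.single_eq_same] at hpt ⊢
            omega
          · rw [Finsupp.single_eq_of_ne hj] at hpt ⊢
            omega
      · rw [if_neg h1, mul_zero]

lemma QP.totalDegree_pderiv_le (i : Fin 2) (f : MvPolynomial (Fin 2) k) (n : ℕ)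
    (h : f.totalDegree ≤ n + 1) : (pderiv i f).totalDegree ≤ n := by
  rw [totalDegree]
  apply Finset.sup_le
  intro d hd
  rw [mem_support_iff, QP.coeff_pderiv] at hd
  have hc : coeff (d + Finsupp.single i 1) f ≠ 0 := fun h0 => hd (by rw [h0, mul_zero])
  have hmem : d + Finsupp.single i 1 ∈ f.support := mem_support_iff.mpr hc
  have hle := le_totalDegree hmem
  have hsum : (d + Finsupp.single i 1).sum (fun _ e => e) =
      d.sum (fun _ e => e) + 1 := by
    rw [Finsupp.sum_add_index' (fun _ => rfl) (fun _ _ _ => rfl),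
      Finsupp.sum_single_index rfl]
  omega

lemma QP.exists_pderiv_ne_zero (f : MvPolynomial (Fin 2) k) (h : f.totalDegree ≠ 0) :
    ∃ i, pderiv i f ≠ 0 := by
  have : ∃ m ∈ f.support, ∃ j, m j ≠ 0 := by
    by_contra hcon
    push_neg at hcon
    apply h
    rw [(totalDegree_eq_zero_iff _ f).mpr]
    intro m hm x
    exact hcon m hm x
  obtain ⟨m, hm, j, hj⟩ := this
  refine ⟨j, fun h0 => ?_⟩
  have hle : Finsupp.single j 1 ≤ m := by
    rw [Finsupp.single_le_iff]
    omega
  have hcan : (m - Finsupp.single j 1) + Finsupp.single j 1 = m :=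
    tsub_add_cancel_of_le hle
  have hc := QP.coeff_pderiv j f (m - Finsupp.single j 1)
  rw [h0, coeff_zero, hcan] at hc
  have : coeff m f = 0 := by
    rcases mul_eq_zero.mp hc.symm with h2 | h2
    · exact absurd h2 (Nat.cast_ne_zero.mpr (Nat.succ_ne_zero _))
    · exact h2
  exact mem_support_iff.mp hm this

lemma QP.eq_C_of_totalDegree_eq_zero (f : MvPolynomial (Fin 2) k)
    (h : f.totalDegree = 0) : f = C (coeff 0 f) := by
  ext m
  rcases eq_or_ne m 0 with rfl | hm
  · simp
  · rw [coeff_C, if_neg (Ne.symm hm)]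
    by_contra hc
    have hmem : m ∈ f.support := mem_support_iff.mpr hc
    apply hm
    ext j
    exact (totalDegree_eq_zero_iff _ f).mp h m hmem j

end Deriv

section Ker
variable {k : Type*} [Field k]

noncomputable def QP.tau0 : MvPolynomial (Fin 2) k →ₐ[k] Polynomial k :=
  aeval ![0, Polynomial.X]

noncomputable def QP.tau1 : MvPolynomial (Fin 2) k →ₐ[k] Polynomial k :=
  aeval ![Polynomial.X, 0]

noncomputable def QP.iota0 : Polynomial k →ₐ[k] MvPolynomial (Fin 2) k :=
  Polynomial.aeval (X 1)

noncomputable def QP.iota1 : Polynomial k →ₐ[k] MvPolynomial (Fin 2) k :=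
  Polynomial.aeval (X 0)

lemma QP.rem0 (f : MvPolynomial (Fin 2) k) :
    f - QP.iota0 (QP.tau0 f) ∈ Ideal.span {(X 0 : MvPolynomial (Fin 2) k)} := by
  induction f using MvPolynomial.induction_on with
  | C a =>
    have : QP.iota0 (QP.tau0 (C a : MvPolynomial (Fin 2) k)) = C a := by
      simp [QP.tau0, QP.iota0, algHom_C, algebraMap_eq]
    rw [this, sub_self]
    exact Ideal.zero_mem _
  | add p q hp hq =>
    have : p + q - QP.iota0 (QP.tau0 (p + q)) =
        (p - QP.iota0 (QP.tau0 p)) + (q - QP.iota0 (QP.tau0 q)) := by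
      rw [map_add, map_add]; ring
    rw [this]; exact Ideal.add_mem _ hp hq
  | mul_X p n ih =>
    fin_cases n
    all_goals simp only [Fin.zero_eta, Fin.mk_one]
    · have : QP.tau0 (p * X 0) = 0 := by
        rw [map_mul, QP.tau0, aeval_X]
        simp
      rw [this, map_zero, sub_zero]
      exact Ideal.mul_mem_left _ p (Ideal.subset_span (Set.mem_singleton _))
    · have : QP.iota0 (QP.tau0 (p * X 1)) = QP.iota0 (QP.tau0 p) * X 1 := by
        rw [map_mul, QP.tau0, aeval_X]
        simp only [Matrix.cons_val_one, Matrix.head_cons, Matrix.cons_val_zero]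
        rw [map_mul, QP.iota0, Polynomial.aeval_X]
      rw [this,
        show p * X 1 - QP.iota0 (QP.tau0 p) * X 1 = (p - QP.iota0 (QP.tau0 p)) * X 1 by ring]
      exact Ideal.mul_mem_right _ _ ih

lemma QP.rem1 (f : MvPolynomial (Fin 2) k) :
    f - QP.iota1 (QP.tau1 f) ∈ Ideal.span {(X 1 : MvPolynomial (Fin 2) k)} := by
  induction f using MvPolynomial.induction_on with
  | C a =>
    have : QP.iota1 (QP.tau1 (C a : MvPolynomial (Fin 2) k)) = C a := by
      simp [QP.tau1, QP.iota1, algHom_C, algebraMap_eq]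
    rw [this, sub_self]
    exact Ideal.zero_mem _
  | add p q hp hq =>
    have : p + q - QP.iota1 (QP.tau1 (p + q)) =
        (p - QP.iota1 (QP.tau1 p)) + (q - QP.iota1 (QP.tau1 q)) := by
      rw [map_add, map_add]; ring
    rw [this]; exact Ideal.add_mem _ hp hq
  | mul_X p n ih =>
    fin_cases n
    all_goals simp only [Fin.zero_eta, Fin.mk_one]
    · have : QP.iota1 (QP.tau1 (p * X 0)) = QP.iota1 (QP.tau1 p) * X 0 := by
        rw [map_mul, QP.tau1, aeval_X]
        simp only [Matrix.cons_val_zero]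
        rw [map_mul, QP.iota1, Polynomial.aeval_X]
      rw [this,
        show p * X 0 - QP.iota1 (QP.tau1 p) * X 0 = (p - QP.iota1 (QP.tau1 p)) * X 0 by ring]
      exact Ideal.mul_mem_right _ _ ih
    · have : QP.tau1 (p * X 1) = 0 := by
        rw [map_mul, QP.tau1, aeval_X]
        simp
      rw [this, map_zero, sub_zero]
      exact Ideal.mul_mem_left _ p (Ideal.subset_span (Set.mem_singleton _))

lemma QP.mem_span_X0_iff (f : MvPolynomial (Fin 2) k) :
    f ∈ Ideal.span {(X 0 : MvPolynomial (Fin 2) k)} ↔ QP.tau0 f = 0 := by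
  constructor
  · intro hf
    rw [Ideal.mem_span_singleton] at hf
    obtain ⟨g, rfl⟩ := hf
    rw [map_mul, QP.tau0, aeval_X]
    simp
  · intro hf
    have := QP.rem0 f
    rwa [hf, map_zero, sub_zero] at this

lemma QP.mem_span_X1_iff (f : MvPolynomial (Fin 2) k) :
    f ∈ Ideal.span {(X 1 : MvPolynomial (Fin 2) k)} ↔ QP.tau1 f = 0 := by
  constructor
  · intro hf
    rw [Ideal.mem_span_singleton] at hf
    obtain ⟨g, rfl⟩ := hf
    rw [map_mul, QP.tau1, aeval_X]
    simp
  · intro hf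
    have := QP.rem1 f
    rwa [hf, map_zero, sub_zero] at this

lemma QP.span_X0_prime : (Ideal.span {(X 0 : MvPolynomial (Fin 2) k)}).IsPrime := by
  have hker : Ideal.span {(X 0 : MvPolynomial (Fin 2) k)} =
      RingHom.ker (QP.tau0 (k := k)).toRingHom := by
    ext f
    rw [RingHom.mem_ker, QP.mem_span_X0_iff]
    rfl
  rw [hker]
  exact RingHom.ker_isPrime _

lemma QP.span_X1_prime : (Ideal.span {(X 1 : MvPolynomial (Fin 2) k)}).IsPrime := by
  have hker : Ideal.span {(X 1 : MvPolynomial (Fin 2) k)} =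
      RingHom.ker (QP.tau1 (k := k)).toRingHom := by
    ext f
    rw [RingHom.mem_ker, QP.mem_span_X1_iff]
    rfl
  rw [hker]
  exact RingHom.ker_isPrime _

lemma QP.rem_eval (α β : k) (f : MvPolynomial (Fin 2) k) :
    f - C (eval ![α, β] f) ∈ Ideal.span {X 0 - C α, X 1 - C β} := by
  induction f using MvPolynomial.induction_on with
  | C a => simp
  | add p q hp hq =>
    have : p + q - C (eval ![α, β] (p + q)) =
        (p - C (eval ![α, β] p)) + (q - C (eval ![α, β] q)) := by
      rw [map_add, map_add]; ring
    rw [this]; exact Ideal.add_mem _ hp hq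
  | mul_X p n ih =>
    have hgen : X n - C (![α, β] n) ∈ Ideal.span {X 0 - C α, X 1 - C β} := by
      fin_cases n
      · exact Ideal.subset_span (Set.mem_insert _ _)
      · exact Ideal.subset_span (Set.mem_insert_iff.mpr (Or.inr rfl))
    have : p * X n - C (eval ![α, β] (p * X n)) =
        (p - C (eval ![α, β] p)) * X n + C (eval ![α, β] p) * (X n - C (![α, β] n)) := by
      rw [map_mul, eval_X, map_mul]; ring
    rw [this]
    exact Ideal.add_mem _ (Ideal.mul_mem_right _ _ ih) (Ideal.mul_mem_left _ _ hgen)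

lemma QP.span_max (α β : k) :
    (Ideal.span ({X 0 - C α, X 1 - C β} : Set (MvPolynomial (Fin 2) k))).IsMaximal := by
  have hker : Ideal.span ({X 0 - C α, X 1 - C β} : Set (MvPolynomial (Fin 2) k)) =
      RingHom.ker (eval ![α, β] : MvPolynomial (Fin 2) k →+* k) := by
    apply le_antisymm
    · rw [Ideal.span_le]
      rintro g (rfl | rfl)
      · simp [RingHom.mem_ker]
      · simp_all [RingHom.mem_ker]
    · intro f hf
      rw [RingHom.mem_ker] at hf
      have := QP.rem_eval α β f
      rwa [show eval ![α, β] f = 0 from hf, map_zero, sub_zero] at this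
  rw [hker]
  exact RingHom.ker_isMaximal_of_surjective _ (fun a => ⟨C a, eval_C _⟩)

end Ker

section Lin
variable {k : Type*} [Field k] [IsAlgClosed k]

/-- If the image under `Polynomial.aeval (X v)` of a nonzero one-variable polynomial
lies in a prime ideal, then some linear factor lies in the prime. -/
lemma QP.exists_linear_of_mem {Q : Ideal (MvPolynomial (Fin 2) k)} (hQ : Q.IsPrime)
    (v : Fin 2) (p : Polynomial k) (hp : p ≠ 0)
    (hmem : Polynomial.aeval (X v : MvPolynomial (Fin 2) k) p ∈ Q) :
    ∃ β : k, X v - C β ∈ Q := by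
  have hsplit := Polynomial.Splits.eq_prod_roots (IsAlgClosed.splits p)
  set ι : Polynomial k →ₐ[k] MvPolynomial (Fin 2) k := Polynomial.aeval (X v) with hι
  have himg : ι p = C p.leadingCoeff *
      (p.roots.map (fun a => (X v : MvPolynomial (Fin 2) k) - C a)).prod := by
    conv_lhs => rw [hsplit]
    rw [map_mul, map_multiset_prod, Multiset.map_map]
    congr 1
    · rw [Polynomial.aeval_C, algebraMap_eq]
    · congr 1
      apply Multiset.map_congr rfl
      intro a _
      simp only [Function.comp_apply, map_sub, Polynomial.aeval_X, Polynomial.aeval_C,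
        algebraMap_eq, hι]
  rw [himg] at hmem
  have hC : (C p.leadingCoeff : MvPolynomial (Fin 2) k) ∉ Q := by
    intro hc
    have hu : IsUnit (C p.leadingCoeff : MvPolynomial (Fin 2) k) :=
      (isUnit_iff_ne_zero.mpr (Polynomial.leadingCoeff_ne_zero.mpr hp)).map C
    exact hQ.ne_top (Q.eq_top_of_isUnit_mem hc hu)
  rcases hQ.mem_or_mem hmem with hc | hc
  · exact absurd hc hC
  · rw [hQ.multiset_prod_mem_iff_exists_mem] at hc
    obtain ⟨g, hg, hgQ⟩ := hc
    rw [Multiset.mem_map] at hg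
    obtain ⟨a, _, rfl⟩ := hg
    exact ⟨a, hgQ⟩

end Lin

open MvPolynomial in
/-- the classification of prime Poisson ideals of `k[x,y]` with
`{x,y} = xy`, for `k` algebraically closed of characteristic zero. -/
theorem poisson_primes_of_quantum_plane_limit (k : Type*) [Field k] [CharZero k]
    [IsAlgClosed k] (B : PoissonBracket k (MvPolynomial (Fin 2) k))
    (hB : B.bracket (X 0) (X 1) = X 0 * X 1) (Q : Ideal (MvPolynomial (Fin 2) k)) :
    (Q.IsPrime ∧ IsPoissonIdeal B Q) ↔
      ((∃ α : k, Q = Ideal.span {X 0 - C α, X 1}) ∨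
       (∃ β : k, Q = Ideal.span {X 0, X 1 - C β}) ∨
       Q = Ideal.span {(X 0 : MvPolynomial (Fin 2) k)} ∨
       Q = Ideal.span {(X 1 : MvPolynomial (Fin 2) k)} ∨
       Q = ⊥) := by
  constructor
  · rintro ⟨hp, hpo⟩
    by_cases hb : Q = ⊥
    · exact Or.inr (Or.inr (Or.inr (Or.inr hb)))
    -- constants in Q force triviality
    have hconst : ∀ f ∈ Q, f.totalDegree = 0 → f = 0 := by
      intro f hf hd
      have hfc := QP.eq_C_of_totalDegree_eq_zero f hd
      rcases eq_or_ne (coeff 0 f) 0 with h | h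
      · rw [hfc, h, map_zero]
      · exfalso
        rw [hfc] at hf
        have hu : IsUnit (C (coeff 0 f) : MvPolynomial (Fin 2) k) :=
          (isUnit_iff_ne_zero.mpr h).map C
        exact hp.ne_top (Q.eq_top_of_isUnit_mem hf hu)
    have hXY : X 0 ∈ Q ∨ X 1 ∈ Q := by
      by_contra hcon
      push_neg at hcon
      obtain ⟨hx, hy⟩ := hcon
      apply hb
      have key : ∀ n : ℕ, ∀ f ∈ Q, f.totalDegree ≤ n → f = 0 := by
        intro n
        induction n with
        | zero => exact fun f hf hd => hconst f hf (Nat.le_zero.mp hd)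
        | succ n ih =>
          intro f hf hd
          have hder : ∀ i : Fin 2, pderiv i f ∈ Q := by
            intro i
            fin_cases i
            · have h1 := neg_mem (hpo (X 1) f hf)
              rw [QP.brk_X1_left B hB, neg_neg] at h1
              rcases hp.mem_or_mem h1 with h | h
              · rcases hp.mem_or_mem h with h' | h'
                exacts [absurd h' hx, absurd h' hy]
              · exact h
            · have h1 := hpo (X 0) f hf
              rw [QP.brk_X0_left B hB] at h1
              rcases hp.mem_or_mem h1 with h | h
              · rcases hp.mem_or_mem h with h' | h'
                exacts [absurd h' hx, absurd h' hy]
              · exact h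
          have hdz : ∀ i : Fin 2, pderiv i f = 0 := fun i =>
            ih _ (hder i) (QP.totalDegree_pderiv_le i f n hd)
          rcases eq_or_ne f.totalDegree 0 with htd | htd
          · exact hconst f hf htd
          · obtain ⟨i, hi⟩ := QP.exists_pderiv_ne_zero f htd
            exact absurd (hdz i) hi
      rw [eq_bot_iff]
      intro f hf
      rw [Ideal.mem_bot]
      exact key f.totalDegree f hf le_rfl
    rcases hXY with hx | hy
    · -- X 0 ∈ Q
      by_cases h0 : Q = Ideal.span {(X 0 : MvPolynomial (Fin 2) k)}
      · exact Or.inr (Or.inr (Or.inl h0))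
      · have hle0 : Ideal.span {(X 0 : MvPolynomial (Fin 2) k)} ≤ Q := by
          rw [Ideal.span_le]
          rintro g rfl
          exact hx
        have hlt : Ideal.span {(X 0 : MvPolynomial (Fin 2) k)} < Q :=
          lt_of_le_of_ne hle0 (Ne.symm h0)
        obtain ⟨f, hfQ, hfn⟩ := SetLike.exists_of_lt hlt
        have hpne : QP.tau0 f ≠ 0 := fun h => hfn ((QP.mem_span_X0_iff f).mpr h)
        have hι : QP.iota0 (QP.tau0 f) ∈ Q := by
          have h3 : f - QP.iota0 (QP.tau0 f) ∈ Q := hle0 (QP.rem0 f)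
          have h4 := Q.sub_mem hfQ h3
          simpa using h4
        obtain ⟨β, hβ⟩ := QP.exists_linear_of_mem hp 1 (QP.tau0 f) hpne hι
        refine Or.inr (Or.inl ⟨β, ?_⟩)
        have hle : Ideal.span ({X 0, X 1 - C β} : Set (MvPolynomial (Fin 2) k)) ≤ Q := by
          rw [Ideal.span_le]
          rintro g (rfl | rfl)
          · exact hx
          · exact hβ
        have hmax := QP.span_max (0 : k) β
        rw [map_zero, sub_zero] at hmax
        exact (hmax.eq_of_le hp.ne_top hle).symm
    · -- X 1 ∈ Q
      by_cases h1 : Q = Ideal.span {(X 1 : MvPolynomial (Fin 2) k)}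
      · exact Or.inr (Or.inr (Or.inr (Or.inl h1)))
      · have hle1 : Ideal.span {(X 1 : MvPolynomial (Fin 2) k)} ≤ Q := by
          rw [Ideal.span_le]
          rintro g rfl
          exact hy
        have hlt : Ideal.span {(X 1 : MvPolynomial (Fin 2) k)} < Q :=
          lt_of_le_of_ne hle1 (Ne.symm h1)
        obtain ⟨f, hfQ, hfn⟩ := SetLike.exists_of_lt hlt
        have hpne : QP.tau1 f ≠ 0 := fun h => hfn ((QP.mem_span_X1_iff f).mpr h)
        have hι : QP.iota1 (QP.tau1 f) ∈ Q := by
          have h3 : f - QP.iota1 (QP.tau1 f) ∈ Q := hle1 (QP.rem1 f)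
          have h4 := Q.sub_mem hfQ h3
          simpa using h4
        obtain ⟨α, hα⟩ := QP.exists_linear_of_mem hp 0 (QP.tau1 f) hpne hι
        refine Or.inl ⟨α, ?_⟩
        have hle : Ideal.span ({X 0 - C α, X 1} : Set (MvPolynomial (Fin 2) k)) ≤ Q := by
          rw [Ideal.span_le]
          rintro g (rfl | rfl)
          · exact hα
          · exact hy
        have hmax := QP.span_max α (0 : k)
        rw [map_zero, sub_zero] at hmax
        exact (hmax.eq_of_le hp.ne_top hle).symm
  · -- backward direction
    rintro (⟨α, rfl⟩ | ⟨β, rfl⟩ | rfl | rfl | rfl)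
    · constructor
      · have hmax := QP.span_max α (0 : k)
        rw [map_zero, sub_zero] at hmax
        exact hmax.isPrime
      · apply QP.isPoissonIdeal_span
        rintro a s (rfl | rfl)
        · rw [QP.brk_sub_right, QP.brk_C_right', sub_zero,
            QP.brk_X0_right B hB]
          apply neg_mem
          rw [show X 0 * X 1 * pderiv 1 a = (X 0 * pderiv 1 a) * X 1 by ring]
          exact Ideal.mul_mem_left _ _
            (Ideal.subset_span (Set.mem_insert_iff.mpr (Or.inr rfl)))
        · rw [QP.brk_X1_right B hB,
            show X 0 * X 1 * pderiv 0 a = (X 0 * pderiv 0 a) * X 1 by ring]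
          exact Ideal.mul_mem_left _ _
            (Ideal.subset_span (Set.mem_insert_iff.mpr (Or.inr rfl)))
    · constructor
      · have hmax := QP.span_max (0 : k) β
        rw [map_zero, sub_zero] at hmax
        exact hmax.isPrime
      · apply QP.isPoissonIdeal_span
        rintro a s (rfl | rfl)
        · rw [QP.brk_X0_right B hB]
          apply neg_mem
          rw [show X 0 * X 1 * pderiv 1 a = (X 1 * pderiv 1 a) * X 0 by ring]
          exact Ideal.mul_mem_left _ _ (Ideal.subset_span (Set.mem_insert _ _))
        · rw [QP.brk_sub_right, QP.brk_C_right', sub_zero,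
            QP.brk_X1_right B hB,
            show X 0 * X 1 * pderiv 0 a = (X 1 * pderiv 0 a) * X 0 by ring]
          exact Ideal.mul_mem_left _ _ (Ideal.subset_span (Set.mem_insert _ _))
    · constructor
      · exact QP.span_X0_prime
      · apply QP.isPoissonIdeal_span
        rintro a s rfl
        rw [QP.brk_X0_right B hB]
        apply neg_mem
        rw [show X 0 * X 1 * pderiv 1 a = (X 1 * pderiv 1 a) * X 0 by ring]
        exact Ideal.mul_mem_left _ _ (Ideal.subset_span (Set.mem_singleton _))
    · constructor
      · exact QP.span_X1_prime
      · apply QP.isPoissonIdeal_span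
        rintro a s rfl
        rw [QP.brk_X1_right B hB,
          show X 0 * X 1 * pderiv 0 a = (X 0 * pderiv 0 a) * X 1 by ring]
        exact Ideal.mul_mem_left _ _ (Ideal.subset_span (Set.mem_singleton _))
    · constructor
      · exact Ideal.bot_prime
      · intro a x hx
        rw [Ideal.mem_bot] at hx
        subst hx
        rw [QP.brk_zero_right]
        exact Ideal.zero_mem _
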